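/- (Joint lower semicontinuity lemma) Let I ⊂ ℝ be measurable and let h_n, h, m_n, m : I → [0,+∞] be measurable functions such that liminf_n h_n(x) ≥ h(x) for a.e. x ∈ I and m_n ⇀ m weakly in L¹(I). Then liminf_n ∫_I h_n m_n dx ≥ ∫_I h m dx. -/

import Mathlib

open MeasureTheory Filter
open scoped ENNReal Topology

/-- Joint lower semicontinuity: if `liminf hₙ ≥ h` a.e. on `I` and `mₙ ⇀ m`
weakly in `L¹(I)` (nonnegative), then `liminf ∫ hₙ mₙ ≥ ∫ h m`. -/
theorem stmt8 (I : Set ℝ) (hI : MeasurableSet I)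
    (h : ℕ → ℝ → ℝ≥0∞) (hlim : ℝ → ℝ≥0∞)
    (m : ℕ → ℝ → ℝ) (mlim : ℝ → ℝ)
    (hmeas : ∀ n, Measurable (h n)) (hmeas' : Measurable hlim)
    (hm_meas : ∀ n, Measurable (m n)) (hm_meas' : Measurable mlim)
    (hm_nonneg : ∀ n x, 0 ≤ m n x) (hm'_nonneg : ∀ x, 0 ≤ mlim x)
    (hm_int : ∀ n, IntegrableOn (m n) I) (hm'_int : IntegrableOn mlim I)
    (hliminf : ∀ᵐ x ∂(volume.restrict I),
      hlim x ≤ Filter.atTop.liminf fun n => h n x)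
    (hweak : ∀ φ : ℝ → ℝ, Measurable φ → (∃ C, ∀ x, |φ x| ≤ C) →
      Tendsto (fun n => ∫ x in I, m n x * φ x) atTop
        (𝓝 (∫ x in I, mlim x * φ x))) :
    ∫⁻ x in I, hlim x * ENNReal.ofReal (mlim x) ≤
      Filter.atTop.liminf fun n => ∫⁻ x in I, h n x * ENNReal.ofReal (m n x) := by
  classical
  set L : ℝ → ℝ≥0∞ := fun x => Filter.atTop.liminf fun n => h n x with hLdef
  set H : ℕ → ℝ → ℝ≥0∞ := fun N x => ⨅ j, ⨅ (_ : j ≥ N), h j x with hHdef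
  set F : ℕ → ℝ → ℝ≥0∞ := fun n x => min (H n x) (n : ℝ≥0∞) with hFdef
  have hHmeas : ∀ N, Measurable (H N) := fun N =>
    Measurable.iInf fun j => Measurable.iInf fun _ => hmeas j
  have hFmeas : ∀ n, Measurable (F n) := fun n => (hHmeas n).min measurable_const
  have hHmono : ∀ a b : ℕ, a ≤ b → ∀ x, H a x ≤ H b x := by
    intro a b hab x
    exact le_iInf fun j => le_iInf fun hj => iInf₂_le j (hab.trans hj)
  have hHle : ∀ N j, N ≤ j → ∀ x, H N x ≤ h j x := fun N j hj x => iInf₂_le j hj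
  have hFmono : Monotone F := by
    intro a b hab x
    exact min_le_min (hHmono a b hab x) (by exact_mod_cast Nat.cast_le.2 hab)
  have hFtop : ∀ n x, F n x ≠ ⊤ := fun n x =>
    ne_top_of_le_ne_top (ENNReal.natCast_ne_top n) (min_le_right _ _)
  have hsupF : ∀ x, ⨆ n, F n x = L x := by
    intro x
    apply le_antisymm
    · refine iSup_le fun n => le_trans (min_le_left _ _) ?_
      show H n x ≤ liminf (fun k => h k x) atTop
      rw [liminf_eq_iSup_iInf_of_nat]
      exact le_iSup (fun N => ⨅ i, ⨅ (_ : i ≥ N), h i x) n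
    · rw [hLdef]
      simp only [liminf_eq_iSup_iInf_of_nat]
      refine iSup_le fun N => ?_
      have : (⨅ i, ⨅ (_ : i ≥ N), h i x) = H N x := rfl
      rw [this]
      rcases eq_or_ne (H N x) ⊤ with htop | hne
      · -- H N x = ⊤ : then F n x = n for n ≥ N, and sup = ⊤
        rw [htop]
        rw [top_le_iff, eq_top_iff, ← ENNReal.iSup_natCast]
        refine iSup_le fun k => ?_
        refine le_iSup_of_le (max N k) ?_
        have h1 : H (max N k) x = ⊤ := top_le_iff.1 (htop ▸ hHmono N (max N k) (le_max_left _ _) x)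
        have : F (max N k) x = (max N k : ℕ) := by
          rw [hFdef]; simp [h1]
        rw [this]
        exact_mod_cast Nat.cast_le.2 (le_max_right N k)
      · obtain ⟨k, hk⟩ := ENNReal.exists_nat_gt hne
        refine le_iSup_of_le (max N k) ?_
        have h1 : H N x ≤ H (max N k) x := hHmono N (max N k) (le_max_left _ _) x
        have h2 : H N x ≤ ((max N k : ℕ) : ℝ≥0∞) :=
          le_trans hk.le (by exact_mod_cast Nat.cast_le.2 (le_max_right N k))
        exact le_min h1 h2
  -- key equality: for bounded F n and nonneg integrable g
  have key : ∀ (n : ℕ) (g : ℝ → ℝ), Measurable g → (∀ x, 0 ≤ g x) → IntegrableOn g I →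
      ∫⁻ x in I, F n x * ENNReal.ofReal (g x) =
        ENNReal.ofReal (∫ x in I, g x * (F n x).toReal) := by
    intro n g hg hg0 hgi
    have hptw : ∀ x, F n x * ENNReal.ofReal (g x) = ENNReal.ofReal (g x * (F n x).toReal) := by
      intro x
      rw [ENNReal.ofReal_mul (hg0 x), mul_comm]
      congr 1
      exact (ENNReal.ofReal_toReal (hFtop n x)).symm
    simp_rw [hptw]
    have hint : Integrable (fun x => g x * (F n x).toReal) (volume.restrict I) := by
      have := Integrable.bdd_mul (f := fun x => (F n x).toReal) (g := g) (c := n) hgi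
        ((hFmeas n).ennreal_toReal.aestronglyMeasurable) (Filter.Eventually.of_forall fun x => by
          rw [Real.norm_eq_abs, abs_of_nonneg ENNReal.toReal_nonneg]
          exact ENNReal.toReal_le_of_le_ofReal (by positivity)
            (le_trans (min_le_right _ _) (by simp [ENNReal.ofReal_natCast])))
      simpa [mul_comm] using this
    exact (MeasureTheory.ofReal_integral_eq_lintegral_ofReal hint
      (Filter.Eventually.of_forall fun x =>
        mul_nonneg (hg0 x) ENNReal.toReal_nonneg)).symm
  -- step 3: each truncated integral is below the liminf
  have step3 : ∀ n, (∫⁻ x in I, F n x * ENNReal.ofReal (mlim x)) ≤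
      Filter.atTop.liminf fun k => ∫⁻ x in I, h k x * ENNReal.ofReal (m k x) := by
    intro n
    set φ : ℝ → ℝ := fun x => (F n x).toReal with hφdef
    have hφmeas : Measurable φ := (hFmeas n).ennreal_toReal
    have hφbdd : ∃ C, ∀ x, |φ x| ≤ C := ⟨n, fun x => by
      rw [abs_of_nonneg ENNReal.toReal_nonneg]
      exact ENNReal.toReal_le_of_le_ofReal (by positivity)
        (le_trans (min_le_right _ _) (by simp [ENNReal.ofReal_natCast]))⟩
    have htend : Tendsto (fun k => ENNReal.ofReal (∫ x in I, m k x * φ x)) atTop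
        (𝓝 (∫⁻ x in I, F n x * ENNReal.ofReal (mlim x))) := by
      rw [key n mlim hm_meas' hm'_nonneg hm'_int]
      exact (ENNReal.continuous_ofReal.tendsto _).comp (hweak φ hφmeas hφbdd)
    have hev : ∀ᶠ k in atTop, ENNReal.ofReal (∫ x in I, m k x * φ x) ≤
        ∫⁻ x in I, h k x * ENNReal.ofReal (m k x) := by
      filter_upwards [eventually_ge_atTop n] with k hk
      rw [← key n (m k) (hm_meas k) (hm_nonneg k) (hm_int k)]
      refine lintegral_mono fun x => ?_
      exact mul_le_mul_left (le_trans (min_le_left _ _) (hHle n k hk x)) _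
    calc (∫⁻ x in I, F n x * ENNReal.ofReal (mlim x))
        = Filter.atTop.liminf fun k => ENNReal.ofReal (∫ x in I, m k x * φ x) :=
          htend.liminf_eq.symm
      _ ≤ _ := liminf_le_liminf hev
  -- step 1 & 2 : lower bound by monotone convergence
  have step1 : ∫⁻ x in I, hlim x * ENNReal.ofReal (mlim x) ≤
      ∫⁻ x in I, L x * ENNReal.ofReal (mlim x) := by
    refine lintegral_mono_ae ?_
    filter_upwards [hliminf] with x hx
    exact mul_le_mul_left hx _
  have step2 : ∫⁻ x in I, L x * ENNReal.ofReal (mlim x) =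
      ⨆ n, ∫⁻ x in I, F n x * ENNReal.ofReal (mlim x) := by
    have hms := lintegral_iSup (μ := volume.restrict I)
      (f := fun n x => F n x * ENNReal.ofReal (mlim x))
      (fun n => (hFmeas n).mul (ENNReal.measurable_ofReal.comp hm_meas'))
      (fun a b hab x => mul_le_mul_left (hFmono hab x) _)
    calc ∫⁻ x in I, L x * ENNReal.ofReal (mlim x)
        = ∫⁻ x in I, ⨆ n, F n x * ENNReal.ofReal (mlim x) := by
          congr 1; funext x; rw [← ENNReal.iSup_mul, hsupF x]
      _ = ⨆ n, ∫⁻ x in I, F n x * ENNReal.ofReal (mlim x) := hms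
  calc ∫⁻ x in I, hlim x * ENNReal.ofReal (mlim x)
      ≤ ∫⁻ x in I, L x * ENNReal.ofReal (mlim x) := step1
    _ = ⨆ n, ∫⁻ x in I, F n x * ENNReal.ofReal (mlim x) := step2
    _ ≤ _ := iSup_le step3
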